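/- Let α be a composition and n ≥ ℓ(α). If σ ∈ P_α \ C_α, then μ_{P_α}(σ) = 0, where μ_{P_α} is the Möbius-type function on P_α defined by ∑_{q ≤ σ} μ_{P_α}(q) = 1 for all σ ∈ P_α. -/

import Mathlib

open MvPolynomial Finset
open scoped Classical

/-- The positive part of a weak composition: delete the zero entries. -/
def posList (l : List ℕ) : List ℕ := l.filter (fun x => x ≠ 0)

/-- `S_α`: length-`n` tuples of nonnegative integers whose positive part is `α`. -/
def Sset (α : List ℕ) (n : ℕ) : Set (Fin n → ℕ) :=
  {b | posList (List.ofFn b) = α}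

/-- `P_α`: componentwise maxima of nonempty collections of elements of `S_α`. -/
def Pset (α : List ℕ) (n : ℕ) : Set (Fin n → ℕ) :=
  {σ | ∃ T : Finset (Fin n → ℕ), T.Nonempty ∧ (↑T : Set (Fin n → ℕ)) ⊆ Sset α n ∧ σ = T.sup id}

/-- The local moves (M.1): `0p ↦ p0` and (M.2'): `0p ↦ pp` for `p > 0`. -/
inductive GlideMove : List ℕ → List ℕ → Prop
  | m1 (u v : List ℕ) (p : ℕ) (hp : 0 < p) :
      GlideMove (u ++ 0 :: p :: v) (u ++ p :: 0 :: v)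
  | m2 (u v : List ℕ) (p : ℕ) (hp : 0 < p) :
      GlideMove (u ++ 0 :: p :: v) (u ++ p :: p :: v)

/-- `C_α`: strings obtainable from elements of `S_α` by iterated local moves. -/
def Cset (α : List ℕ) (n : ℕ) : Set (Fin n → ℕ) :=
  {σ | ∃ b ∈ Sset α n, Relation.ReflTransGen GlideMove (List.ofFn b) (List.ofFn σ)}


/-! ### Auxiliary machinery -/

@[simp] lemma posList_nil : posList [] = [] := rfl
@[simp] lemma posList_cons_zero (l : List ℕ) : posList (0 :: l) = posList l := by simp [posList]
@[simp] lemma posList_cons_pos (x : ℕ) (hx : x ≠ 0) (l : List ℕ) :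
    posList (x :: l) = x :: posList l := by simp [posList, hx]

/-- number of run-decompositions of `w` with respect to composition `γ` -/
def Dcount : List ℕ → List ℕ → ℕ
  | [], [] => 1
  | [], _ :: _ => 0
  | _ :: _, [] => 0
  | a :: γ, x :: w => if x = a then Dcount γ w + Dcount (a :: γ) w else 0

/-- greedy indicator that `γ` embeds entrywise-dominated as a subsequence of `p` -/
def efun : List ℕ → List ℕ → ℤ
  | [], _ => 1
  | _ :: _, [] => 0
  | a :: γ, x :: p => if a ≤ x then efun γ p else efun (a :: γ) p

@[simp] lemma Dcount_nil_nil : Dcount [] [] = 1 := rfl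
@[simp] lemma Dcount_nil_cons (x : ℕ) (w : List ℕ) : Dcount [] (x :: w) = 0 := rfl
@[simp] lemma Dcount_cons_nil (a : ℕ) (γ : List ℕ) : Dcount (a :: γ) [] = 0 := rfl
lemma Dcount_cons_cons (a : ℕ) (γ : List ℕ) (x : ℕ) (w : List ℕ) :
    Dcount (a :: γ) (x :: w) = if x = a then Dcount γ w + Dcount (a :: γ) w else 0 := rfl
@[simp] lemma efun_nil (p : List ℕ) : efun [] p = 1 := by cases p <;> rfl
@[simp] lemma efun_cons_nil (a : ℕ) (γ : List ℕ) : efun (a :: γ) [] = 0 := rfl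
lemma efun_cons_cons (a : ℕ) (γ : List ℕ) (x : ℕ) (p : List ℕ) :
    efun (a :: γ) (x :: p) = if a ≤ x then efun γ p else efun (a :: γ) p := rfl

/-- the candidate Möbius function -/
noncomputable def gfun (α : List ℕ) {n : ℕ} (q : Fin n → ℕ) : ℤ :=
  (-1) ^ (α.length + (posList (List.ofFn q)).length) * (Dcount α (posList (List.ofFn q)) : ℤ)


/-- drop+mono for efun -/
lemma efun_aux : ∀ (p : List ℕ),
    (∀ a γ, efun (a :: γ) p = 1 → efun γ p = 1) ∧
    (∀ γ x, efun γ p = 1 → efun γ (x :: p) = 1) := by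
  intro p
  induction p with
  | nil =>
    constructor
    · intro a γ h; simp at h
    · intro γ x h
      cases γ with
      | nil => simp
      | cons b γ' => simp at h
  | cons y p' ih =>
    obtain ⟨ihdrop, ihmono⟩ := ih
    have hdrop : ∀ a γ, efun (a :: γ) (y :: p') = 1 → efun γ (y :: p') = 1 := by
      intro a γ h
      rw [efun_cons_cons] at h
      by_cases hay : a ≤ y
      · rw [if_pos hay] at h
        -- h : efun γ p' = 1 ; goal : efun γ (y :: p') = 1
        exact ihmono γ y h
      · rw [if_neg hay] at h
        -- h : efun (a::γ) p' = 1
        have h2 : efun γ p' = 1 := ihdrop a γ h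
        cases γ with
        | nil => simp
        | cons b γ' =>
          rw [efun_cons_cons]
          by_cases hby : b ≤ y
          · rw [if_pos hby]; exact ihdrop b γ' h2
          · rw [if_neg hby]; exact h2
    refine ⟨hdrop, ?_⟩
    intro γ x h
    cases γ with
    | nil => simp
    | cons b γ' =>
      rw [efun_cons_cons]
      by_cases hbx : b ≤ x
      · rw [if_pos hbx]; exact hdrop b γ' h
      · rw [if_neg hbx]; exact h

lemma efun_mono {γ p : List ℕ} (x : ℕ) (h : efun γ p = 1) : efun γ (x :: p) = 1 :=
  (efun_aux p).2 γ x h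

/-- embedding gives efun = 1 -/
lemma efun_of_le : ∀ {q p : List ℕ}, List.Forall₂ (· ≤ ·) q p → efun (posList q) p = 1 := by
  intro q p h
  induction h with
  | nil => simp
  | @cons x y q' p' hxy _ ih =>
    by_cases hx : x = 0
    · subst hx
      rw [posList_cons_zero]
      exact efun_mono y ih
    · rw [posList_cons_pos x hx, efun_cons_cons, if_pos hxy]
      exact ih


lemma sum_piFinset_succ (n : ℕ) (s : Fin (n+1) → Finset ℕ) (f : (Fin (n+1) → ℕ) → ℤ) :
    ∑ q ∈ Fintype.piFinset s, f q
      = ∑ y ∈ s 0, ∑ r ∈ Fintype.piFinset (fun i : Fin n => s i.succ), f (Fin.cons y r) := by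
  rw [← Finset.sum_product']
  refine Finset.sum_nbij' (fun q => (q 0, Fin.tail q)) (fun yr => Fin.cons yr.1 yr.2) ?_ ?_ ?_ ?_ ?_
  · intro q hq
    rw [Fintype.mem_piFinset] at hq
    simp only [Finset.mem_product]
    exact ⟨hq 0, by rw [Fintype.mem_piFinset]; intro i; exact hq i.succ⟩
  · intro yr hyr
    simp only [Finset.mem_product] at hyr
    rw [Fintype.mem_piFinset]
    intro i
    refine Fin.cases ?_ ?_ i
    · simpa using hyr.1
    · intro j; simp only [Fin.cons_succ]
      have := hyr.2; rw [Fintype.mem_piFinset] at this; exact this j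
  · intro q hq; exact Fin.cons_self_tail q
  · intro yr hyr; simp [Fin.tail_cons]
  · intro q hq; rw [Fin.cons_self_tail]

lemma claimA : ∀ (n : ℕ) (γ : List ℕ), (∀ a ∈ γ, 0 < a) → ∀ (p : Fin n → ℕ),
    ∑ q ∈ Fintype.piFinset (fun i => Finset.range (p i + 1)),
      ((-1 : ℤ) ^ (posList (List.ofFn q)).length * (Dcount γ (posList (List.ofFn q)) : ℤ))
      = (-1) ^ γ.length * efun γ (List.ofFn p) := by
  intro n
  induction n with
  | zero =>
    intro γ hγ p
    have h1 : ∀ q : Fin 0 → ℕ, List.ofFn q = [] := fun q => List.ofFn_zero (f := q)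
    rw [Finset.sum_congr rfl (fun q _ => by rw [h1 q])]
    rw [Finset.sum_const]
    have hcard : (Fintype.piFinset (fun i : Fin 0 => Finset.range (p i + 1))).card = 1 := by
      rw [Fintype.card_piFinset]; simp
    rw [hcard, one_smul, List.ofFn_zero]
    cases γ with
    | nil => simp
    | cons a γ' => simp
  | succ n ih =>
    intro γ hγ p
    rw [sum_piFinset_succ]
    have hofn : ∀ (y : ℕ) (r : Fin n → ℕ), List.ofFn (Fin.cons y r : Fin (n+1) → ℕ) = y :: List.ofFn r := by
      intro y r
      rw [List.ofFn_succ]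
      simp [Fin.cons_zero, Fin.cons_succ]
    set p' : Fin n → ℕ := fun i => p i.succ with hp'
    have hofp : List.ofFn p = p 0 :: List.ofFn p' := by rw [List.ofFn_succ]
    -- inner sums
    set Srest := Fintype.piFinset (fun i : Fin n => Finset.range (p' i + 1)) with hSrest
    have hinner : ∀ y : ℕ,
        (∑ r ∈ Srest, ((-1 : ℤ) ^ (posList (List.ofFn (Fin.cons y r : Fin (n+1) → ℕ))).length *
          (Dcount γ (posList (List.ofFn (Fin.cons y r : Fin (n+1) → ℕ))) : ℤ)))
        = if y = 0 then ((-1 : ℤ) ^ γ.length * efun γ (List.ofFn p'))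
          else (∑ r ∈ Srest, ((-1 : ℤ) ^ (y :: posList (List.ofFn r)).length *
              (Dcount γ (y :: posList (List.ofFn r)) : ℤ))) := by
      intro y
      by_cases hy : y = 0
      · subst hy
        rw [if_pos rfl, ← ih γ hγ p']
        refine Finset.sum_congr rfl (fun r _ => ?_)
        rw [hofn, posList_cons_zero]
      · rw [if_neg hy]
        refine Finset.sum_congr rfl (fun r _ => ?_)
        rw [hofn, posList_cons_pos y hy]
    rw [Finset.sum_congr rfl (fun y _ => hinner y)]
    cases γ with
    | nil =>
      -- only y = 0 contributes
      have : ∀ y ∈ Finset.range (p 0 + 1),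
          (if y = 0 then ((-1 : ℤ) ^ ([] : List ℕ).length * efun [] (List.ofFn p'))
            else (∑ r ∈ Srest, ((-1 : ℤ) ^ (y :: posList (List.ofFn r)).length *
              (Dcount [] (y :: posList (List.ofFn r)) : ℤ))))
          = if y = 0 then 1 else 0 := by
        intro y _
        by_cases hy : y = 0
        · simp [hy]
        · rw [if_neg hy, if_neg hy]
          refine Finset.sum_eq_zero (fun r _ => by simp)
      rw [Finset.sum_congr rfl this, Finset.sum_ite_eq' (Finset.range (p 0 + 1)) 0 (fun _ => (1:ℤ))]
      simp
    | cons a γ' =>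
      have ha : 0 < a := hγ a (by simp)
      have hγ' : ∀ b ∈ γ', 0 < b := fun b hb => hγ b (by simp [hb])
      -- value of the inner sum at y = a
      have hB : (∑ r ∈ Srest, ((-1 : ℤ) ^ (a :: posList (List.ofFn r)).length *
            (Dcount (a :: γ') (a :: posList (List.ofFn r)) : ℤ)))
          = (-1) ^ (a :: γ').length * efun γ' (List.ofFn p')
            - (-1) ^ (a :: γ').length * efun (a :: γ') (List.ofFn p') := by
        have : ∀ r : Fin n → ℕ,
            ((-1 : ℤ) ^ (a :: posList (List.ofFn r)).length *
              (Dcount (a :: γ') (a :: posList (List.ofFn r)) : ℤ))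
            = -(((-1 : ℤ) ^ (posList (List.ofFn r)).length * (Dcount γ' (posList (List.ofFn r)) : ℤ))
                + ((-1 : ℤ) ^ (posList (List.ofFn r)).length * (Dcount (a :: γ') (posList (List.ofFn r)) : ℤ))) := by
          intro r
          rw [Dcount_cons_cons, if_pos rfl]
          push_cast
          ring_nf
          rw [List.length_cons]
          ring
        rw [Finset.sum_congr rfl (fun r _ => this r)]
        rw [Finset.sum_neg_distrib, Finset.sum_add_distrib]
        rw [ih γ' hγ' p', ih (a :: γ') hγ p']
        rw [List.length_cons, pow_succ]
        ring
      -- now compute the outer sum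
      have houter : ∀ y ∈ Finset.range (p 0 + 1),
          (if y = 0 then ((-1 : ℤ) ^ (a :: γ').length * efun (a :: γ') (List.ofFn p'))
            else (∑ r ∈ Srest, ((-1 : ℤ) ^ (y :: posList (List.ofFn r)).length *
              (Dcount (a :: γ') (y :: posList (List.ofFn r)) : ℤ))))
          = (if y = 0 then ((-1 : ℤ) ^ (a :: γ').length * efun (a :: γ') (List.ofFn p')) else 0)
            + (if y = a then
                ((-1) ^ (a :: γ').length * efun γ' (List.ofFn p')
                  - (-1) ^ (a :: γ').length * efun (a :: γ') (List.ofFn p')) else 0) := by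
        intro y _
        by_cases hy : y = 0
        · subst hy
          rw [if_pos rfl, if_pos rfl, if_neg (by omega : (0:ℕ) ≠ a), add_zero]
        · rw [if_neg hy, if_neg hy, zero_add]
          by_cases hya : y = a
          · subst hya
            rw [if_pos rfl, hB]
          · rw [if_neg hya]
            refine Finset.sum_eq_zero (fun r _ => ?_)
            rw [Dcount_cons_cons, if_neg hya]
            simp
      rw [Finset.sum_congr rfl houter, Finset.sum_add_distrib]
      rw [Finset.sum_ite_eq' (Finset.range (p 0 + 1)) (0 : ℕ)
        (fun _ => ((-1 : ℤ) ^ (a :: γ').length * efun (a :: γ') (List.ofFn p')))]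
      rw [Finset.sum_ite_eq' (Finset.range (p 0 + 1)) (a : ℕ)
        (fun _ => ((-1 : ℤ) ^ (a :: γ').length * efun γ' (List.ofFn p')
          - (-1 : ℤ) ^ (a :: γ').length * efun (a :: γ') (List.ofFn p')))]
      rw [if_pos (by simp : (0:ℕ) ∈ Finset.range (p 0 + 1))]
      rw [hofp, efun_cons_cons]
      by_cases hap : a ≤ p 0
      · rw [if_pos (by rw [Finset.mem_range]; omega : a ∈ Finset.range (p 0 + 1)), if_pos hap]
        ring
      · rw [if_neg (by rw [Finset.mem_range]; omega : ¬ a ∈ Finset.range (p 0 + 1)), if_neg hap]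
        ring


lemma Dcount_cons_ne (γ : List ℕ) (x : ℕ) (w : List ℕ) (h : Dcount γ (x :: w) ≠ 0) :
    ∃ γ', γ = x :: γ' ∧ (Dcount γ' w ≠ 0 ∨ Dcount γ w ≠ 0) := by
  cases γ with
  | nil => simp at h
  | cons c γ' =>
    rw [Dcount_cons_cons] at h
    by_cases hxc : x = c
    · subst hxc
      rw [if_pos rfl] at h
      refine ⟨γ', rfl, ?_⟩
      omega
    · rw [if_neg hxc] at h; exact absurd rfl h

lemma exists_place : ∀ (q : List ℕ) (γ : List ℕ), Dcount γ (posList q) ≠ 0 →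
    ∃ s, List.Forall₂ (· ≤ ·) s q ∧ posList s = γ := by
  intro q
  induction q with
  | nil =>
    intro γ h
    cases γ with
    | nil => exact ⟨[], List.Forall₂.nil, rfl⟩
    | cons c γ' => simp at h
  | cons y r ih =>
    intro γ h
    by_cases hy : y = 0
    · subst hy
      rw [posList_cons_zero] at h
      obtain ⟨s, hs1, hs2⟩ := ih γ h
      exact ⟨0 :: s, List.Forall₂.cons (le_refl 0) hs1, by rw [posList_cons_zero]; exact hs2⟩
    · rw [posList_cons_pos y hy] at h
      obtain ⟨γ', rfl, hcase⟩ := Dcount_cons_ne γ y (posList r) h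
      rcases hcase with h1 | h2
      · obtain ⟨s, hs1, hs2⟩ := ih γ' h1
        exact ⟨y :: s, List.Forall₂.cons (le_refl y) hs1,
          by rw [posList_cons_pos y hy, hs2]⟩
      · obtain ⟨s, hs1, hs2⟩ := ih (y :: γ') h2
        exact ⟨0 :: s, List.Forall₂.cons (Nat.zero_le y) hs1,
          by rw [posList_cons_zero]; exact hs2⟩

lemma zero_out : ∀ {s r : List ℕ}, List.Forall₂ (· ≤ ·) s r → ∀ {c : ℕ} {t : List ℕ},
    posList s = c :: t → ∃ s', List.Forall₂ (· ≤ ·) s' r ∧ posList s' = t := by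
  intro s r h
  induction h with
  | nil => intro c t hct; simp at hct
  | @cons x y s' r' hxy htail ih =>
    intro c t hct
    by_cases hx : x = 0
    · subst hx
      rw [posList_cons_zero] at hct
      obtain ⟨s'', h1, h2⟩ := ih hct
      exact ⟨0 :: s'', List.Forall₂.cons (Nat.zero_le y) h1, by rw [posList_cons_zero]; exact h2⟩
    · rw [posList_cons_pos x hx] at hct
      have ht : posList s' = t := (List.cons.injEq _ _ _ _ ▸ hct).2
      exact ⟨0 :: s', List.Forall₂.cons (Nat.zero_le y) htail,
        by rw [posList_cons_zero]; exact ht⟩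

lemma exists_place_at : ∀ (q : List ℕ) (γ : List ℕ), Dcount γ (posList q) ≠ 0 →
    ∀ (i : ℕ), i < q.length → q.getD i 0 ≠ 0 →
    ∃ s, List.Forall₂ (· ≤ ·) s q ∧ posList s = γ ∧ s.getD i 0 = q.getD i 0 := by
  intro q
  induction q with
  | nil => intro γ _ i hi; simp at hi
  | cons x r ih =>
    intro γ h i hi hne
    cases i with
    | zero =>
      rw [List.getD_cons_zero] at hne ⊢
      rw [posList_cons_pos x hne] at h
      obtain ⟨γ', rfl, hcase⟩ := Dcount_cons_ne γ x (posList r) h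
      rcases hcase with h1 | h2
      · obtain ⟨s, hs1, hs2⟩ := exists_place r γ' h1
        exact ⟨x :: s, List.Forall₂.cons (le_refl x) hs1,
          by rw [posList_cons_pos x hne, hs2], List.getD_cons_zero⟩
      · obtain ⟨s, hs1, hs2⟩ := exists_place r (x :: γ') h2
        obtain ⟨s', hs1', hs2'⟩ := zero_out hs1 hs2
        exact ⟨x :: s', List.Forall₂.cons (le_refl x) hs1',
          by rw [posList_cons_pos x hne, hs2'], List.getD_cons_zero⟩
    | succ j =>
      rw [List.getD_cons_succ] at hne ⊢
      have hj : j < r.length := by simpa using hi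
      by_cases hx : x = 0
      · subst hx
        rw [posList_cons_zero] at h
        obtain ⟨s, hs1, hs2, hs3⟩ := ih γ h j hj hne
        exact ⟨0 :: s, List.Forall₂.cons (le_refl 0) hs1,
          by rw [posList_cons_zero]; exact hs2, by rw [List.getD_cons_succ]; exact hs3⟩
      · rw [posList_cons_pos x hx] at h
        obtain ⟨γ', rfl, hcase⟩ := Dcount_cons_ne γ x (posList r) h
        rcases hcase with h1 | h2
        · obtain ⟨s, hs1, hs2, hs3⟩ := ih γ' h1 j hj hne
          exact ⟨x :: s, List.Forall₂.cons (le_refl x) hs1,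
            by rw [posList_cons_pos x hx, hs2], by rw [List.getD_cons_succ]; exact hs3⟩
        · obtain ⟨s, hs1, hs2, hs3⟩ := ih (x :: γ') h2 j hj hne
          exact ⟨0 :: s, List.Forall₂.cons (Nat.zero_le x) hs1,
            by rw [posList_cons_zero]; exact hs2, by rw [List.getD_cons_succ]; exact hs3⟩

/-- conversion helpers -/
lemma ofFn_getD {n : ℕ} (s : List ℕ) (h : s.length = n) :
    List.ofFn (fun i : Fin n => s.getD i 0) = s := by
  apply List.ext_getElem
  · simp [h]
  · intro i h1 h2
    simp only [List.getElem_ofFn]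
    rw [List.getD_eq_getElem s 0 (by omega)]

lemma getD_ofFn {n : ℕ} (q : Fin n → ℕ) (i : Fin n) :
    (List.ofFn q).getD i 0 = q i := by
  rw [List.getD_eq_getElem _ 0 (by simp)]
  simp

lemma forall₂_getD {s r : List ℕ} (h : List.Forall₂ (· ≤ ·) s r) (i : ℕ) :
    s.getD i 0 ≤ r.getD i 0 := by
  induction h generalizing i with
  | nil => simp
  | @cons x y s' r' hxy htail ih =>
    cases i with
    | zero => simpa using hxy
    | succ j => simpa using ih j

lemma forall₂_ofFn {n : ℕ} {a b : Fin n → ℕ} (h : ∀ i, a i ≤ b i) :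
    List.Forall₂ (· ≤ ·) (List.ofFn a) (List.ofFn b) := by
  induction n with
  | zero => simp [List.ofFn_zero]
  | succ m ih =>
    rw [List.ofFn_succ, List.ofFn_succ]
    exact List.Forall₂.cons (h 0) (ih (fun i => h i.succ))

lemma mem_P_of_D {α : List ℕ} {n : ℕ} (q : Fin n → ℕ)
    (hD : Dcount α (posList (List.ofFn q)) ≠ 0) : q ∈ Pset α n := by
  set T : Finset (Fin n → ℕ) :=
    (Fintype.piFinset fun i => Finset.range (q i + 1)).filter
      (fun s => posList (List.ofFn s) = α) with hT
  have hmem : ∀ s : Fin n → ℕ, s ∈ T ↔ ((∀ i, s i ≤ q i) ∧ posList (List.ofFn s) = α) := by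
    intro s
    rw [hT, Finset.mem_filter, Fintype.mem_piFinset]
    simp only [Finset.mem_range, Nat.lt_succ_iff]
  -- converting a list placement into a function
  have hconv : ∀ s : List ℕ, List.Forall₂ (· ≤ ·) s (List.ofFn q) → posList s = α →
      ∃ sf : Fin n → ℕ, sf ∈ T ∧ List.ofFn sf = s := by
    intro s h1 h2
    have hlen : s.length = n := by
      have := List.Forall₂.length_eq h1
      simpa using this
    refine ⟨fun i => s.getD i 0, ?_, ofFn_getD s hlen⟩
    rw [hmem]
    constructor
    · intro i
      have := forall₂_getD h1 i
      rwa [getD_ofFn q i] at this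
    · rw [ofFn_getD s hlen]; exact h2
  refine ⟨T, ?_, ?_, ?_⟩
  · obtain ⟨s, h1, h2⟩ := exists_place (List.ofFn q) α hD
    obtain ⟨sf, hsf, _⟩ := hconv s h1 h2
    exact ⟨sf, hsf⟩
  · intro s hs
    rw [Finset.mem_coe, hmem] at hs
    exact hs.2
  · funext i
    rw [Finset.sup_apply]
    apply le_antisymm
    · rcases Nat.eq_zero_or_pos (q i) with h0 | hpos
      · rw [h0]; exact Nat.zero_le _
      · obtain ⟨s, h1, h2, h3⟩ := exists_place_at (List.ofFn q) α hD i (by simp) (by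
          rw [getD_ofFn q i]; omega)
        obtain ⟨sf, hsf, hofn⟩ := hconv s h1 h2
        have : q i = sf i := by
          rw [getD_ofFn q i] at h3
          have : (List.ofFn sf).getD i 0 = s.getD i 0 := by rw [hofn]
          rw [getD_ofFn sf i] at this
          omega
        rw [this]
        exact Finset.le_sup (f := fun s : Fin n → ℕ => id s i) hsf
    · apply Finset.sup_le
      intro s hs
      rw [hmem] at hs
      exact hs.1 i

/-- Glide moves are preserved under prepending an entry. -/
lemma GlideMove.cons {x y : List ℕ} (c : ℕ) (h : GlideMove x y) : GlideMove (c :: x) (c :: y) := by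
  cases h with
  | m1 u v p hp => exact GlideMove.m1 (c :: u) v p hp
  | m2 u v p hp => exact GlideMove.m2 (c :: u) v p hp

lemma glide_cons {x y : List ℕ} (c : ℕ) (h : Relation.ReflTransGen GlideMove x y) :
    Relation.ReflTransGen GlideMove (c :: x) (c :: y) :=
  h.lift (fun l => c :: l) (fun _ _ hab => GlideMove.cons c hab)

/-- Duplicate a value to the left across a block of zeros. -/
lemma glide_dup : ∀ (j : ℕ) (x : ℕ) (r : List ℕ), x ≠ 0 →
    Relation.ReflTransGen GlideMove (List.replicate (j+1) 0 ++ x :: r)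
      (x :: (List.replicate j 0 ++ x :: r)) := by
  intro j
  induction j with
  | zero =>
    intro x r hx
    have := GlideMove.m2 [] r x (Nat.pos_of_ne_zero hx)
    simpa using Relation.ReflTransGen.single this
  | succ m ih =>
    intro x r hx
    have step1 : Relation.ReflTransGen GlideMove (List.replicate (m+2) 0 ++ x :: r)
        (0 :: x :: (List.replicate m 0 ++ x :: r)) := by
      have : List.replicate (m+2) 0 ++ x :: r = 0 :: (List.replicate (m+1) 0 ++ x :: r) := by
        rw [List.replicate_succ]; rfl
      rw [this]
      exact glide_cons 0 (ih x r hx)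
    have step2 : GlideMove (0 :: x :: (List.replicate m 0 ++ x :: r))
        (x :: 0 :: (List.replicate m 0 ++ x :: r)) := by
      have := GlideMove.m1 [] (List.replicate m 0 ++ x :: r) x (Nat.pos_of_ne_zero hx)
      simpa using this
    have : x :: 0 :: (List.replicate m 0 ++ x :: r)
        = x :: (List.replicate (m+1) 0 ++ x :: r) := by
      rw [List.replicate_succ]; rfl
    exact step1.trans (this ▸ Relation.ReflTransGen.single step2)

lemma split_first : ∀ (l : List ℕ) (x : ℕ) (w : List ℕ), posList l = x :: w →
    ∃ j r, l = List.replicate j 0 ++ x :: r ∧ posList r = w := by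
  intro l
  induction l with
  | nil => intro x w h; simp at h
  | cons y l' ih =>
    intro x w h
    by_cases hy : y = 0
    · subst hy
      rw [posList_cons_zero] at h
      obtain ⟨j, r, h1, h2⟩ := ih x w h
      exact ⟨j + 1, r, by rw [List.replicate_succ, h1]; rfl, h2⟩
    · rw [posList_cons_pos y hy] at h
      obtain ⟨rfl, rfl⟩ : y = x ∧ posList l' = w := by
        constructor
        · exact (List.cons.injEq _ _ _ _ ▸ h).1
        · exact (List.cons.injEq _ _ _ _ ▸ h).2
      exact ⟨0, l', by simp, rfl⟩

lemma glide_chain : ∀ (l : List ℕ) (γ : List ℕ), Dcount γ (posList l) ≠ 0 →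
    ∃ b : List ℕ, b.length = l.length ∧ posList b = γ ∧
      Relation.ReflTransGen GlideMove b l := by
  intro l
  induction l with
  | nil =>
    intro γ h
    rw [posList_nil] at h
    cases γ with
    | nil => exact ⟨[], rfl, rfl, Relation.ReflTransGen.refl⟩
    | cons c γ' => rw [Dcount_cons_nil] at h; exact absurd rfl h
  | cons x l' ih =>
    intro γ h
    by_cases hx : x = 0
    · subst hx
      rw [posList_cons_zero] at h
      obtain ⟨b', h1, h2, h3⟩ := ih γ h
      exact ⟨0 :: b', by simp [h1], by rw [posList_cons_zero]; exact h2, glide_cons 0 h3⟩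
    · rw [posList_cons_pos x hx] at h
      obtain ⟨γ', rfl, hcase⟩ := Dcount_cons_ne γ x (posList l') h
      rcases hcase with h1 | h2
      · obtain ⟨b', hb1, hb2, hb3⟩ := ih γ' h1
        exact ⟨x :: b', by simp [hb1], by rw [posList_cons_pos x hx, hb2], glide_cons x hb3⟩
      · obtain ⟨b', hb1, hb2, hb3⟩ := ih (x :: γ') h2
        -- posList l' starts with x
        have hpl : ∃ w, posList l' = x :: w := by
          cases hpll : posList l' with
          | nil => rw [hpll, Dcount_cons_nil] at h2; exact absurd rfl h2
          | cons c w =>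
            rw [hpll, Dcount_cons_cons] at h2
            by_cases hc : c = x
            · subst hc; exact ⟨w, rfl⟩
            · rw [if_neg hc] at h2; exact absurd rfl h2
        obtain ⟨w, hw⟩ := hpl
        obtain ⟨j, r, rfl, hr⟩ := split_first l' x w hw
        refine ⟨0 :: b', by simp [hb1], by rw [posList_cons_zero]; exact hb2, ?_⟩
        have c1 : Relation.ReflTransGen GlideMove (0 :: b')
            (0 :: (List.replicate j 0 ++ x :: r)) := glide_cons 0 hb3
        have c2 : Relation.ReflTransGen GlideMove
            (List.replicate (j+1) 0 ++ x :: r)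
            (x :: (List.replicate j 0 ++ x :: r)) := glide_dup j x r hx
        have e1 : (0 : ℕ) :: (List.replicate j 0 ++ x :: r)
            = List.replicate (j+1) 0 ++ x :: r := by
          rw [List.replicate_succ]; rfl
        exact c1.trans (e1 ▸ c2)

lemma mem_C_of_D {α : List ℕ} {n : ℕ} (σ : Fin n → ℕ)
    (hD : Dcount α (posList (List.ofFn σ)) ≠ 0) : σ ∈ Cset α n := by
  obtain ⟨b, hb1, hb2, hb3⟩ := glide_chain (List.ofFn σ) α hD
  have hlen : b.length = n := by simpa using hb1
  refine ⟨fun i => b.getD i 0, ?_, ?_⟩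
  · show posList (List.ofFn _) = α
    rw [ofFn_getD b hlen]; exact hb2
  · rw [ofFn_getD b hlen]; exact hb3

lemma mu_unique {n : ℕ} (F : Finset (Fin n → ℕ)) (μ ν : (Fin n → ℕ) → ℤ)
    (hμ : ∀ p ∈ F, ∑ q ∈ F.filter (fun q => q ≤ p), μ q = 1)
    (hν : ∀ p ∈ F, ∑ q ∈ F.filter (fun q => q ≤ p), ν q = 1) :
    ∀ p ∈ F, μ p = ν p := by
  suffices h : ∀ (m : ℕ) (p : Fin n → ℕ), p ∈ F →
      (F.filter (fun q => q ≤ p)).card ≤ m → μ p = ν p by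
    intro p hp; exact h _ p hp le_rfl
  intro m
  induction m with
  | zero =>
    intro p hp hc
    exfalso
    have hmem : p ∈ F.filter (fun q => q ≤ p) := Finset.mem_filter.mpr ⟨hp, le_rfl⟩
    have := Finset.card_pos.mpr ⟨p, hmem⟩
    omega
  | succ m ihm =>
    intro p hp hc
    have hpmem : p ∈ F.filter (fun q => q ≤ p) := Finset.mem_filter.mpr ⟨hp, le_rfl⟩
    have hsum_mu := hμ p hp
    have hsum_nu := hν p hp
    rw [← Finset.sum_erase_add _ _ hpmem] at hsum_mu hsum_nu
    have herase : ∑ q ∈ (F.filter (fun q => q ≤ p)).erase p, μ q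
        = ∑ q ∈ (F.filter (fun q => q ≤ p)).erase p, ν q := by
      refine Finset.sum_congr rfl (fun q hq => ?_)
      have hq' := Finset.mem_of_mem_erase hq
      rw [Finset.mem_filter] at hq'
      have hqne := Finset.ne_of_mem_erase hq
      refine ihm q hq'.1 ?_
      have hsub : F.filter (fun r => r ≤ q) ⊆ F.filter (fun r => r ≤ p) := by
        intro r hr
        rw [Finset.mem_filter] at hr ⊢
        exact ⟨hr.1, le_trans hr.2 hq'.2⟩
      have hp_not : p ∉ F.filter (fun r => r ≤ q) := by
        rw [Finset.mem_filter]
        rintro ⟨_, hple⟩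
        exact hqne (le_antisymm hq'.2 hple)
      have hlt : (F.filter (fun r => r ≤ q)).card < (F.filter (fun r => r ≤ p)).card :=
        Finset.card_lt_card ((Finset.ssubset_iff_of_subset hsub).mpr ⟨p, hpmem, hp_not⟩)
      omega
    rw [herase] at hsum_mu
    omega


/-- If `σ ∈ P_α \ C_α`, then `μ_{P_α}(σ) = 0`, where `μ_{P_α}` is the Möbius-type
function on `P_α` determined by `∑_{q ≤ p} μ_{P_α}(q) = 1` for all `p ∈ P_α`. -/
theorem stmt_8 (α : List ℕ) (hα : ∀ a ∈ α, 0 < a) (n : ℕ) (hn : α.length ≤ n)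
    (F : Finset (Fin n → ℕ)) (hF : (↑F : Set (Fin n → ℕ)) = Pset α n)
    (μ : (Fin n → ℕ) → ℤ)
    (hμ : ∀ p ∈ F, ∑ q ∈ F.filter (fun q => q ≤ p), μ q = 1)
    (σ : Fin n → ℕ) (hσP : σ ∈ Pset α n) (hσC : σ ∉ Cset α n) :
    μ σ = 0 := by
  -- σ is in F
  have hσF : σ ∈ F := Finset.mem_coe.mp (by rw [hF]; exact hσP)
  -- the explicit Möbius-type function
  have hgsum : ∀ p ∈ F, ∑ q ∈ F.filter (fun q => q ≤ p), gfun α q = 1 := by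
    intro p hp
    have hpP : p ∈ Pset α n := by rw [← hF]; exact hp
    have hsub : F.filter (fun q => q ≤ p) ⊆
        Fintype.piFinset (fun i => Finset.range (p i + 1)) := by
      intro q hq
      rw [Finset.mem_filter] at hq
      rw [Fintype.mem_piFinset]
      intro i
      rw [Finset.mem_range, Nat.lt_succ_iff]
      exact hq.2 i
    have hzero : ∀ q ∈ Fintype.piFinset (fun i => Finset.range (p i + 1)),
        q ∉ F.filter (fun q => q ≤ p) → gfun α q = 0 := by
      intro q hq hnq
      have hqle : q ≤ p := by
        rw [Fintype.mem_piFinset] at hq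
        intro i
        have := hq i
        rw [Finset.mem_range, Nat.lt_succ_iff] at this
        exact this
      have hqnF : q ∉ F := fun hqF => hnq (Finset.mem_filter.mpr ⟨hqF, hqle⟩)
      have hD : Dcount α (posList (List.ofFn q)) = 0 := by
        by_contra hD
        exact hqnF (Finset.mem_coe.mp (by rw [hF]; exact mem_P_of_D q hD))
      unfold gfun
      rw [hD]
      simp
    rw [Finset.sum_subset hsub hzero]
    have hgf : ∀ q : Fin n → ℕ, gfun α q
        = (-1) ^ α.length * ((-1 : ℤ) ^ (posList (List.ofFn q)).length *
            (Dcount α (posList (List.ofFn q)) : ℤ)) := by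
      intro q
      unfold gfun
      rw [pow_add]
      ring
    rw [Finset.sum_congr rfl (fun q _ => hgf q), ← Finset.mul_sum]
    rw [claimA n α hα p]
    have hef : efun α (List.ofFn p) = 1 := by
      obtain ⟨T, ⟨t, ht⟩, hTS, hTsup⟩ := hpP
      have htα : posList (List.ofFn t) = α := hTS (Finset.mem_coe.mpr ht)
      have htle : ∀ i, t i ≤ p i := by
        intro i
        have : id t ≤ T.sup id := Finset.le_sup ht
        rw [← hTsup] at this
        exact this i
      have := efun_of_le (forall₂_ofFn htle)
      rwa [htα] at this
    rw [hef, mul_one, ← pow_add]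
    exact Even.neg_one_pow ⟨α.length, rfl⟩
  have hμg : μ σ = gfun α σ := mu_unique F μ (gfun α) hμ hgsum σ hσF
  have hD0 : Dcount α (posList (List.ofFn σ)) = 0 := by
    by_contra hD
    exact hσC (mem_C_of_D σ hD)
  rw [hμg]
  unfold gfun
  rw [hD0]
  simp
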